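/- arXiv:2010.07974 — 2 statements merged into one kernel-verified Lean document; each statement's English description precedes it below -/
import Mathlib

section
/- MUSIC noise-correlation function bound (Theorem thm:MUSICperformance). Let y = s + α ∈ ℂ^{M+1} be a data vector written as an ideal signal s plus a perturbation α, let 1 ≤ L < M, and set H = Hankel_L(y), H_s = Hankel_L(s) and E = Hankel_L(α), so H = H_s + E. Assume H_s has rank exactly n, with smallest nonzero singular value ε_min, that L ≥ n and M − L + 1 ≥ n, and that 2‖E‖ < ε_min, where ‖·‖ is the spectral norm. For a matrix K of the same shape with at least n nonzero singular values, let P_noise(K) be an orthogonal projection onto the orthogonal complement of the span of left singular vectors of K corresponding to its n largest singular values, and for z ∈ ℂ define R_K(z) = ‖P_noise(K)·v_L(z)‖₂ / ‖v_L(z)‖₂, where v_L(z) = (1, z, z², …, z^L)ᵀ. Then for every z ∈ ℂ, |R_H(z) − R_{H_s}(z)| ≤ 2‖E‖/ε_min. -/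
open scoped Matrix BigOperators

namespace RB

/-- The spectral norm (largest singular value) of a complex matrix. -/
noncomputable def specNorm {m n : Type} [Fintype m] [Fintype n] [DecidableEq m]
    (A : Matrix m n ℂ) : ℝ :=
  ⨆ i : m, Real.sqrt ((Matrix.isHermitian_mul_conjTranspose_self A).eigenvalues i)

/-- The `(L+1) × (M−L+1)` Hankel matrix of a vector `v ∈ ℂ^{M+1}`. -/
def hankelMat (M L : ℕ) (hLM : L ≤ M) (v : Fin (M + 1) → ℂ) :
    Matrix (Fin (L + 1)) (Fin (M - L + 1)) ℂ :=
  Matrix.of fun j k => v ⟨j.val + k.val, by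
    have hj := j.isLt; have hk := k.isLt; omega⟩

/-- A singular value decomposition `K = U · diag(σ) · Vᴴ` with `U, V` unitary and
`σ` a nonincreasing family of nonnegative singular values (padded with arbitrary
values beyond the minimum dimension). -/
def IsSVD {p q : ℕ} (K : Matrix (Fin p) (Fin q) ℂ) (U : Matrix (Fin p) (Fin p) ℂ)
    (σ : Fin p → ℝ) (V : Matrix (Fin q) (Fin q) ℂ) : Prop :=
  U ∈ Matrix.unitaryGroup (Fin p) ℂ ∧ V ∈ Matrix.unitaryGroup (Fin q) ℂ ∧
    Antitone σ ∧ (∀ i, 0 ≤ σ i) ∧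
    K = U * (Matrix.of fun (i : Fin p) (j : Fin q) => if (i : ℕ) = (j : ℕ) then (σ i : ℂ) else 0) * Vᴴ

/-- The orthogonal projection onto the orthogonal complement of the span of the first
`n` left singular vectors (the columns of `U`). -/
noncomputable def noiseProj {p : ℕ} (n : ℕ) (U : Matrix (Fin p) (Fin p) ℂ) :
    Matrix (Fin p) (Fin p) ℂ :=
  U * Matrix.diagonal (fun i : Fin p => if n ≤ (i : ℕ) then (1 : ℂ) else 0) * Uᴴ

/-- The Euclidean norm of a complex vector. -/
noncomputable def l2norm {p : ℕ} (v : Fin p → ℂ) : ℝ :=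
  Real.sqrt (∑ i, ‖v i‖ ^ 2)

/-- The MUSIC noise-space correlation function `R(z) = ‖P v_L(z)‖₂ / ‖v_L(z)‖₂`,
where `v_L(z) = (1, z, …, z^L)ᵀ`. -/
noncomputable def musicR {L : ℕ} (P : Matrix (Fin (L + 1)) (Fin (L + 1)) ℂ) (z : ℂ) : ℝ :=
  l2norm (P.mulVec fun i : Fin (L + 1) => z ^ (i : ℕ)) /
    l2norm (fun i : Fin (L + 1) => z ^ (i : ℕ))

end RB


namespace RBP
open Matrix Finset RB

variable {p q k N : ℕ}

/-- Zero-padded totalization of a vector. -/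
noncomputable def padC (v : Fin k → ℂ) : ℕ → ℂ :=
  fun t => if h : t < k then v ⟨t, h⟩ else 0

@[simp] lemma padC_coe (v : Fin k → ℂ) (i : Fin k) : padC v i = v i := by
  simp [padC]

lemma padC_of_le (v : Fin k → ℂ) {t : ℕ} (ht : k ≤ t) : padC v t = 0 := by
  have : ¬ t < k := by omega
  simp [padC, this]

noncomputable def padR (d : Fin k → ℝ) : ℕ → ℝ :=
  fun t => if h : t < k then d ⟨t, h⟩ else 0

@[simp] lemma padR_coe (d : Fin k → ℝ) (i : Fin k) : padR d i = d i := by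
  simp [padR]

lemma padR_of_le (d : Fin k → ℝ) {t : ℕ} (ht : k ≤ t) : padR d t = 0 := by
  have : ¬ t < k := by omega
  simp [padR, this]

/-- Rectangular diagonal matrix. -/
def rdiag (p q : ℕ) (d : Fin p → ℝ) : Matrix (Fin p) (Fin q) ℂ :=
  Matrix.of fun i j => if (i : ℕ) = (j : ℕ) then (d i : ℂ) else 0

lemma rdiag_mulVec (d : Fin p → ℝ) (w : Fin q → ℂ) (i : Fin p) :
    (rdiag p q d *ᵥ w) i = d i * padC w i := by
  by_cases h : (i : ℕ) < q
  · rw [Matrix.mulVec, dotProduct, Finset.sum_eq_single (⟨(i : ℕ), h⟩ : Fin q)]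
    · simp [rdiag, padC, h]
    · intro j _ hj
      have : (i : ℕ) ≠ (j : ℕ) := fun hc => hj (by apply Fin.ext; simp [← hc])
      simp [rdiag, this]
    · simp
  · have h0 : ∀ j : Fin q, rdiag p q d i j = 0 := by
      intro j
      have : (i : ℕ) ≠ (j : ℕ) := by have := j.isLt; omega
      simp [rdiag, this]
    rw [Matrix.mulVec, dotProduct]
    rw [padC_of_le _ (by omega)]
    simp [h0]

/-- Convert a `Fin k`-indexed sum of squares into a padded range sum. -/
lemma sum_sq_pad (v : Fin k → ℂ) (hN : k ≤ N) :
    ∑ i, ‖v i‖ ^ 2 = ∑ t ∈ Finset.range N, ‖padC v t‖ ^ 2 := by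
  have hL : ∑ i : Fin k, ‖v i‖ ^ 2
      = ∑ t ∈ Finset.range k, ‖padC v t‖ ^ 2 := by
    rw [← Fin.sum_univ_eq_sum_range]
    exact Finset.sum_congr rfl fun i _ => by rw [padC_coe]
  rw [hL]
  refine Finset.sum_subset (Finset.range_subset_range.2 hN) (fun t _ hts => ?_)
  rw [padC_of_le v (by simpa using hts)]
  simp

lemma l2norm_nonneg (v : Fin k → ℂ) : 0 ≤ l2norm v := Real.sqrt_nonneg _

lemma sq_l2norm (v : Fin k → ℂ) : l2norm v ^ 2 = ∑ i, ‖v i‖ ^ 2 :=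
  Real.sq_sqrt (Finset.sum_nonneg fun i _ => sq_nonneg _)

lemma l2norm_eq_norm (v : Fin k → ℂ) :
    l2norm v = ‖(WithLp.equiv 2 (Fin k → ℂ)).symm v‖ := by
  rw [EuclideanSpace.norm_eq]
  unfold l2norm
  congr 1

lemma l2norm_add_le (u v : Fin k → ℂ) : l2norm (u + v) ≤ l2norm u + l2norm v := by
  rw [l2norm_eq_norm, l2norm_eq_norm, l2norm_eq_norm]
  rw [show (WithLp.equiv 2 (Fin k → ℂ)).symm (u + v)
      = (WithLp.equiv 2 (Fin k → ℂ)).symm u + (WithLp.equiv 2 (Fin k → ℂ)).symm v by simp]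
  exact norm_add_le _ _

lemma l2norm_pos (v : Fin k → ℂ) (hv : v ≠ 0) : 0 < l2norm v := by
  rw [l2norm_eq_norm]
  rw [norm_pos_iff]
  simpa using hv

/-- Cauchy–Schwarz for the real part of the complex dot product. -/
lemma re_dot_le (u v : Fin k → ℂ) : (star u ⬝ᵥ v).re ≤ l2norm u * l2norm v := by
  have h1 : (star u ⬝ᵥ v) = inner ℂ ((WithLp.equiv 2 (Fin k → ℂ)).symm u)
      ((WithLp.equiv 2 (Fin k → ℂ)).symm v) := by
    rw [dotProduct]
    simp [PiLp.inner_apply, RCLike.inner_apply, Pi.star_apply,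
      Complex.star_def]
    exact Finset.sum_congr rfl fun _ _ => mul_comm _ _
  rw [h1, l2norm_eq_norm, l2norm_eq_norm]
  calc (inner ℂ ((WithLp.equiv 2 (Fin k → ℂ)).symm u) ((WithLp.equiv 2 (Fin k → ℂ)).symm v) : ℂ).re
      ≤ ‖(inner ℂ ((WithLp.equiv 2 (Fin k → ℂ)).symm u) ((WithLp.equiv 2 (Fin k → ℂ)).symm v) : ℂ)‖ :=
        Complex.re_le_norm _
    _ ≤ _ := norm_inner_le_norm _ _

lemma dot_self_eq (v : Fin k → ℂ) :
    star v ⬝ᵥ v = ((∑ i, ‖v i‖ ^ 2 : ℝ) : ℂ) := by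
  rw [dotProduct]
  push_cast
  refine Finset.sum_congr rfl fun i _ => ?_
  rw [Pi.star_apply, Complex.star_def, mul_comm, Complex.mul_conj]
  norm_cast
  exact (Complex.sq_norm _).symm

/-- Unitary matrices preserve the sum of squares. -/
lemma sum_sq_unitary {W : Matrix (Fin k) (Fin k) ℂ} (hW : W ∈ Matrix.unitaryGroup (Fin k) ℂ)
    (x : Fin k → ℂ) : ∑ i, ‖(W *ᵥ x) i‖ ^ 2 = ∑ i, ‖x i‖ ^ 2 := by
  have h1 : star (W *ᵥ x) ⬝ᵥ (W *ᵥ x) = star x ⬝ᵥ x := by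
    have hWW : Wᴴ * W = 1 := Matrix.mem_unitaryGroup_iff'.mp hW
    rw [Matrix.star_mulVec, Matrix.dotProduct_mulVec, Matrix.vecMul_vecMul, hWW,
      Matrix.vecMul_one]
  have := (dot_self_eq (W *ᵥ x)).symm.trans (h1.trans (dot_self_eq x))
  exact_mod_cast this

lemma l2norm_mulVec_unitary {W : Matrix (Fin k) (Fin k) ℂ}
    (hW : W ∈ Matrix.unitaryGroup (Fin k) ℂ) (x : Fin k → ℂ) :
    l2norm (W *ᵥ x) = l2norm x := by
  unfold l2norm
  rw [sum_sq_unitary hW]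

section Spec

variable {P : ℕ}

lemma bddAbove_sqrt_eig (A : Matrix (Fin (P + 1)) (Fin q) ℂ) :
    BddAbove (Set.range fun i =>
      Real.sqrt ((Matrix.isHermitian_mul_conjTranspose_self A).eigenvalues i)) :=
  Set.Finite.bddAbove (Set.finite_range _)

lemma sqrt_eig_le (A : Matrix (Fin (P + 1)) (Fin q) ℂ) (i : Fin (P + 1)) :
    Real.sqrt ((Matrix.isHermitian_mul_conjTranspose_self A).eigenvalues i) ≤ specNorm A :=
  le_ciSup (bddAbove_sqrt_eig A) i

lemma specNorm_nonneg (A : Matrix (Fin (P + 1)) (Fin q) ℂ) : 0 ≤ specNorm A :=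
  le_trans (Real.sqrt_nonneg _) (sqrt_eig_le A 0)

lemma eig_le_sq_specNorm (A : Matrix (Fin (P + 1)) (Fin q) ℂ) (i : Fin (P + 1)) :
    (Matrix.isHermitian_mul_conjTranspose_self A).eigenvalues i ≤ specNorm A ^ 2 := by
  have h0 : 0 ≤ (Matrix.isHermitian_mul_conjTranspose_self A).eigenvalues i :=
    Matrix.eigenvalues_self_mul_conjTranspose_nonneg A i
  calc (Matrix.isHermitian_mul_conjTranspose_self A).eigenvalues i
      = Real.sqrt ((Matrix.isHermitian_mul_conjTranspose_self A).eigenvalues i) ^ 2 :=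
        (Real.sq_sqrt h0).symm
    _ ≤ specNorm A ^ 2 :=
        pow_le_pow_left₀ (Real.sqrt_nonneg _) (sqrt_eig_le A i) 2

lemma specNorm_conjTranspose_mulVec_le (A : Matrix (Fin (P + 1)) (Fin q) ℂ)
    (y : Fin (P + 1) → ℂ) : l2norm (Aᴴ *ᵥ y) ≤ specNorm A * l2norm y := by
  set c := specNorm A with hc_def
  have hc : 0 ≤ c := specNorm_nonneg A
  set hB := Matrix.isHermitian_mul_conjTranspose_self A with hB_def
  set W : Matrix (Fin (P + 1)) (Fin (P + 1)) ℂ := ↑hB.eigenvectorUnitary with hW_def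
  have hWu : W ∈ Matrix.unitaryGroup (Fin (P + 1)) ℂ := SetLike.coe_mem _
  have hWu' : Wᴴ ∈ Matrix.unitaryGroup (Fin (P + 1)) ℂ := by
    rw [← Matrix.star_eq_conjTranspose]
    exact Unitary.star_mem hWu
  set z : Fin (P + 1) → ℂ := Wᴴ *ᵥ y with hz_def
  have key : star (Aᴴ *ᵥ y) ⬝ᵥ (Aᴴ *ᵥ y)
      = star z ⬝ᵥ ((Matrix.diagonal (RCLike.ofReal ∘ hB.eigenvalues)) *ᵥ z) := by
    have h1 : star (Aᴴ *ᵥ y) = star y ᵥ* A := by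
      rw [Matrix.star_mulVec, Matrix.conjTranspose_conjTranspose]
    rw [h1, Matrix.dotProduct_mulVec, Matrix.vecMul_vecMul]
    have h2 : A * Aᴴ = W * (Matrix.diagonal (RCLike.ofReal ∘ hB.eigenvalues)) * Wᴴ := by
      have := hB.spectral_theorem
      rwa [Unitary.conjStarAlgAut_apply, Matrix.star_eq_conjTranspose] at this
    conv_lhs => rw [h2]
    have h3 : star y ᵥ* (W * Matrix.diagonal (RCLike.ofReal ∘ hB.eigenvalues) * Wᴴ)
        = ((star y ᵥ* W) ᵥ* Matrix.diagonal (RCLike.ofReal ∘ hB.eigenvalues)) ᵥ* Wᴴ := by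
      rw [Matrix.vecMul_vecMul, Matrix.vecMul_vecMul, mul_assoc]
    rw [h3]
    have h4 : star y ᵥ* W = star z := by
      rw [hz_def, Matrix.star_mulVec, Matrix.conjTranspose_conjTranspose]
    rw [h4]
    rw [← Matrix.dotProduct_mulVec, ← Matrix.dotProduct_mulVec]
  -- turn the diagonal dot product into a real sum
  have key2 : ∑ i, ‖(Aᴴ *ᵥ y) i‖ ^ 2
      = ∑ i, hB.eigenvalues i * ‖z i‖ ^ 2 := by
    have hdiag : star z ⬝ᵥ ((Matrix.diagonal (RCLike.ofReal ∘ hB.eigenvalues)) *ᵥ z)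
        = ((∑ i, hB.eigenvalues i * ‖z i‖ ^ 2 : ℝ) : ℂ) := by
      rw [dotProduct]
      have hterm : ∀ i, star z i * ((Matrix.diagonal (RCLike.ofReal ∘ hB.eigenvalues)) *ᵥ z) i
          = ((hB.eigenvalues i * ‖z i‖ ^ 2 : ℝ) : ℂ) := by
        intro i
        have habs : (starRingEnd ℂ) (z i) * z i = ((‖z i‖ ^ 2 : ℝ) : ℂ) := by
          rw [mul_comm, Complex.mul_conj]
          norm_cast
          rw [Complex.sq_norm]
        simp only [Matrix.mulVec_diagonal, Pi.star_apply, Complex.star_def, Function.comp]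
        rw [show (RCLike.ofReal (hB.eigenvalues i) : ℂ) = ((hB.eigenvalues i : ℝ) : ℂ) from rfl,
          Complex.ofReal_mul]
        linear_combination ((hB.eigenvalues i : ℂ)) * habs
      rw [Finset.sum_congr rfl (fun i _ => hterm i)]
      norm_cast
    have := (dot_self_eq (Aᴴ *ᵥ y)).symm.trans (key.trans hdiag)
    exact_mod_cast this
  have hzy : ∑ i, ‖z i‖ ^ 2 = ∑ i, ‖y i‖ ^ 2 :=
    sum_sq_unitary hWu' y
  have hle : ∑ i, ‖(Aᴴ *ᵥ y) i‖ ^ 2 ≤ c ^ 2 * ∑ i, ‖y i‖ ^ 2 := by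
    rw [key2, ← hzy, Finset.mul_sum]
    refine Finset.sum_le_sum fun i _ => ?_
    exact mul_le_mul_of_nonneg_right (eig_le_sq_specNorm A i) (sq_nonneg _)
  unfold l2norm
  calc Real.sqrt (∑ i, ‖(Aᴴ *ᵥ y) i‖ ^ 2)
      ≤ Real.sqrt (c ^ 2 * ∑ i, ‖y i‖ ^ 2) := Real.sqrt_le_sqrt hle
    _ = c * Real.sqrt (∑ i, ‖y i‖ ^ 2) := by
        rw [Real.sqrt_mul (sq_nonneg c), Real.sqrt_sq hc]

lemma specNorm_mulVec_le (A : Matrix (Fin (P + 1)) (Fin q) ℂ) (x : Fin q → ℂ) :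
    l2norm (A *ᵥ x) ≤ specNorm A * l2norm x := by
  set c := specNorm A with hc_def
  have hc : 0 ≤ c := specNorm_nonneg A
  set y : Fin (P + 1) → ℂ := A *ᵥ x with hy_def
  have h1 : (l2norm y) ^ 2 = (star (Aᴴ *ᵥ y) ⬝ᵥ x).re := by
    have h2 : star (Aᴴ *ᵥ y) ⬝ᵥ x = star y ⬝ᵥ (A *ᵥ x) := by
      rw [Matrix.star_mulVec, Matrix.conjTranspose_conjTranspose, ← Matrix.dotProduct_mulVec]
    rw [h2, ← hy_def, dot_self_eq, sq_l2norm]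
    norm_cast
  have h3 : (l2norm y) ^ 2 ≤ l2norm (Aᴴ *ᵥ y) * l2norm x := h1 ▸ re_dot_le _ _
  have h4 : l2norm (Aᴴ *ᵥ y) ≤ c * l2norm y := specNorm_conjTranspose_mulVec_le A y
  have h5 : (l2norm y) ^ 2 ≤ c * l2norm y * l2norm x :=
    h3.trans (mul_le_mul_of_nonneg_right h4 (l2norm_nonneg x))
  nlinarith [l2norm_nonneg y, l2norm_nonneg x, mul_nonneg hc (l2norm_nonneg x)]

end Spec

section RdiagNorm

lemma sum_sq_prod_pad (d : Fin p → ℝ) (w : Fin q → ℂ) {N : ℕ} (hp : p ≤ N) :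
    ∑ i : Fin p, ‖(rdiag p q d *ᵥ w) i‖ ^ 2
      = ∑ t ∈ Finset.range N, (|padR d t| * ‖padC w t‖) ^ 2 := by
  have h1 : ∀ i : Fin p, ‖(rdiag p q d *ᵥ w) i‖ ^ 2
      = (|padR d (i : ℕ)| * ‖padC w (i : ℕ)‖) ^ 2 := by
    intro i
    rw [rdiag_mulVec, norm_mul, Complex.norm_real, Real.norm_eq_abs, padR_coe]
  rw [Finset.sum_congr rfl (fun i _ => h1 i),
    Fin.sum_univ_eq_sum_range (fun t => (|padR d t| * ‖padC w t‖) ^ 2)]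
  refine Finset.sum_subset (Finset.range_subset_range.2 hp) fun t _ hts => ?_
  rw [padR_of_le d (by simpa using hts)]
  simp

lemma l2norm_rdiag_le (d : Fin p → ℝ) (w : Fin q → ℂ) (c : ℝ) (hc : 0 ≤ c)
    (h : ∀ t : ℕ, |padR d t| * ‖padC w t‖ ≤ c * ‖padC w t‖) :
    l2norm (rdiag p q d *ᵥ w) ≤ c * l2norm w := by
  unfold l2norm
  rw [sum_sq_prod_pad d w (le_max_left p q), sum_sq_pad w (le_max_right p q)]
  have hsum : ∑ t ∈ Finset.range (max p q), (|padR d t| * ‖padC w t‖) ^ 2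
      ≤ c ^ 2 * ∑ t ∈ Finset.range (max p q), ‖padC w t‖ ^ 2 := by
    rw [Finset.mul_sum]
    refine Finset.sum_le_sum fun t _ => ?_
    have h2 : (|padR d t| * ‖padC w t‖) ^ 2
        ≤ (c * ‖padC w t‖) ^ 2 :=
      pow_le_pow_left₀ (by positivity) (h t) 2
    calc (|padR d t| * ‖padC w t‖) ^ 2
        ≤ (c * ‖padC w t‖) ^ 2 := h2
      _ = c ^ 2 * ‖padC w t‖ ^ 2 := mul_pow _ _ _
  calc Real.sqrt (∑ t ∈ Finset.range (max p q), (|padR d t| * ‖padC w t‖) ^ 2)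
      ≤ Real.sqrt (c ^ 2 * ∑ t ∈ Finset.range (max p q), ‖padC w t‖ ^ 2) :=
        Real.sqrt_le_sqrt hsum
    _ = c * Real.sqrt (∑ t ∈ Finset.range (max p q), ‖padC w t‖ ^ 2) := by
        rw [Real.sqrt_mul (sq_nonneg c), Real.sqrt_sq hc]

lemma l2norm_rdiag_ge (d : Fin p → ℝ) (w : Fin q → ℂ) (c : ℝ) (hc : 0 ≤ c)
    (h : ∀ t : ℕ, c * ‖padC w t‖ ≤ |padR d t| * ‖padC w t‖) :
    c * l2norm w ≤ l2norm (rdiag p q d *ᵥ w) := by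
  unfold l2norm
  rw [sum_sq_prod_pad d w (le_max_left p q), sum_sq_pad w (le_max_right p q)]
  have hsum : c ^ 2 * ∑ t ∈ Finset.range (max p q), ‖padC w t‖ ^ 2
      ≤ ∑ t ∈ Finset.range (max p q), (|padR d t| * ‖padC w t‖) ^ 2 := by
    rw [Finset.mul_sum]
    refine Finset.sum_le_sum fun t _ => ?_
    calc c ^ 2 * ‖padC w t‖ ^ 2
        = (c * ‖padC w t‖) ^ 2 := (mul_pow _ _ _).symm
      _ ≤ (|padR d t| * ‖padC w t‖) ^ 2 :=
          pow_le_pow_left₀ (by positivity) (h t) 2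
  calc c * Real.sqrt (∑ t ∈ Finset.range (max p q), ‖padC w t‖ ^ 2)
      = Real.sqrt (c ^ 2 * ∑ t ∈ Finset.range (max p q), ‖padC w t‖ ^ 2) := by
        rw [Real.sqrt_mul (sq_nonneg c), Real.sqrt_sq hc]
    _ ≤ _ := Real.sqrt_le_sqrt hsum

lemma rdiag_mul_rdiag (d : Fin p → ℝ) (d' : Fin p → ℝ) :
    rdiag p p d * rdiag p q d' = rdiag p q (fun i => d i * d' i) := by
  ext i j
  rw [Matrix.mul_apply, Finset.sum_eq_single i]
  · by_cases hij : (i : ℕ) = (j : ℕ)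
    · simp [rdiag, hij]
    · simp [rdiag, hij]
  · intro k _ hk
    have : (i : ℕ) ≠ (k : ℕ) := fun hc => hk.symm (Fin.ext hc)
    simp [rdiag, this]
  · simp

lemma one_eq_rdiag : (1 : Matrix (Fin p) (Fin p) ℂ) = rdiag p p (fun _ => 1) := by
  ext i j
  by_cases hij : i = j
  · simp [rdiag, hij, Matrix.one_apply]
  · have : (i : ℕ) ≠ (j : ℕ) := fun hc => hij (Fin.ext hc)
    simp [rdiag, this, Matrix.one_apply, hij]

lemma rdiag_add (d d' : Fin p → ℝ) :
    rdiag p q d + rdiag p q d' = rdiag p q (fun i => d i + d' i) := by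
  ext i j
  by_cases hij : (i : ℕ) = (j : ℕ)
  · simp only [Matrix.add_apply, rdiag, Matrix.of_apply, if_pos hij]
    push_cast
    ring
  · simp [rdiag, hij]

lemma l2norm_neg (v : Fin k → ℂ) : l2norm (-v) = l2norm v := by
  unfold l2norm
  congr 1
  exact Finset.sum_congr rfl fun i _ => by simp

lemma l2norm_sub_le (u v : Fin k → ℂ) : l2norm (u - v) ≤ l2norm u + l2norm v := by
  rw [sub_eq_add_neg]
  exact (l2norm_add_le _ _).trans (by rw [l2norm_neg])

end RdiagNorm

section Kernel

lemma exists_mulVec_zero {a b : ℕ} (hab : b < a) (M : Matrix (Fin b) (Fin a) ℂ) :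
    ∃ c, c ≠ 0 ∧ M *ᵥ c = 0 := by
  by_contra h
  push_neg at h
  have hinj : Function.Injective M.mulVecLin := by
    rw [← LinearMap.ker_eq_bot, LinearMap.ker_eq_bot']
    intro m hm
    by_contra hm0
    exact h m hm0 hm
  have := LinearMap.finrank_le_finrank_of_injective hinj
  rw [Module.finrank_fin_fun, Module.finrank_fin_fun] at this
  omega

lemma exists_in_ker {a p' q' : ℕ} (A : Matrix (Fin p') (Fin q') ℂ)
    (G : Matrix (Fin q') (Fin a) ℂ) (h : A.rank < a) :
    ∃ c, c ≠ 0 ∧ A *ᵥ (G *ᵥ c) = 0 := by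
  by_contra hcon
  push_neg at hcon
  set f := A.mulVecLin ∘ₗ G.mulVecLin with hf
  have hfapp : ∀ c, f c = A *ᵥ (G *ᵥ c) := fun c => rfl
  have hinj : Function.Injective f := by
    rw [← LinearMap.ker_eq_bot, LinearMap.ker_eq_bot']
    intro m hm
    by_contra hm0
    exact hcon m hm0 (by rw [← hfapp]; exact hm)
  have h1 : Module.finrank ℂ (LinearMap.range f) = a := by
    rw [LinearMap.finrank_range_of_inj hinj, Module.finrank_fin_fun]
  have h2 : LinearMap.range f ≤ LinearMap.range A.mulVecLin :=
    LinearMap.range_comp_le_range _ _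
  have h3 : Module.finrank ℂ (LinearMap.range f)
      ≤ Module.finrank ℂ (LinearMap.range A.mulVecLin) :=
    Submodule.finrank_mono h2
  rw [h1] at h3
  unfold Matrix.rank at h
  omega

end Kernel

section Proj

/-- The complementary (signal-space) projection. -/
noncomputable def sigProj {p : ℕ} (n : ℕ) (W : Matrix (Fin p) (Fin p) ℂ) :
    Matrix (Fin p) (Fin p) ℂ :=
  W * rdiag p p (fun i => if (i : ℕ) < n then 1 else 0) * Wᴴ

lemma noiseProj_eq_rdiag (n : ℕ) (W : Matrix (Fin p) (Fin p) ℂ) :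
    noiseProj n W = W * rdiag p p (fun i => if n ≤ (i : ℕ) then 1 else 0) * Wᴴ := by
  unfold noiseProj
  congr 2
  ext i j
  by_cases hij : i = j
  · subst hij
    by_cases hni : n ≤ (i : ℕ) <;> simp [Matrix.diagonal_apply, rdiag, hni]
  · have hvij : (i : ℕ) ≠ (j : ℕ) := fun hc => hij (Fin.ext hc)
    simp [Matrix.diagonal_apply, rdiag, hij, hvij]

lemma noiseProj_mulVec (n : ℕ) (W : Matrix (Fin p) (Fin p) ℂ) (x : Fin p → ℂ) :
    noiseProj n W *ᵥ x
      = W *ᵥ (rdiag p p (fun i => if n ≤ (i : ℕ) then 1 else 0) *ᵥ (Wᴴ *ᵥ x)) := by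
  rw [noiseProj_eq_rdiag, ← Matrix.mulVec_mulVec, ← Matrix.mulVec_mulVec]

lemma sigProj_mulVec (n : ℕ) (W : Matrix (Fin p) (Fin p) ℂ) (x : Fin p → ℂ) :
    sigProj n W *ᵥ x
      = W *ᵥ (rdiag p p (fun i => if (i : ℕ) < n then 1 else 0) *ᵥ (Wᴴ *ᵥ x)) := by
  unfold sigProj
  rw [← Matrix.mulVec_mulVec, ← Matrix.mulVec_mulVec]

lemma noiseProj_add_sigProj (n : ℕ) {W : Matrix (Fin p) (Fin p) ℂ}
    (hW : W ∈ Matrix.unitaryGroup (Fin p) ℂ) :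
    noiseProj n W + sigProj n W = 1 := by
  rw [noiseProj_eq_rdiag]
  unfold sigProj
  rw [← add_mul, ← mul_add, rdiag_add]
  have h1 : (fun i : Fin p => (if n ≤ (i : ℕ) then (1 : ℝ) else 0)
      + (if (i : ℕ) < n then (1 : ℝ) else 0)) = fun _ => 1 := by
    funext i
    split_ifs <;> (try omega) <;> norm_num
  rw [h1, ← one_eq_rdiag, mul_one]
  exact Matrix.mem_unitaryGroup_iff.mp hW

lemma noiseProj_contraction (n : ℕ) {W : Matrix (Fin p) (Fin p) ℂ}
    (hW : W ∈ Matrix.unitaryGroup (Fin p) ℂ) (x : Fin p → ℂ) :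
    l2norm (noiseProj n W *ᵥ x) ≤ l2norm x := by
  have hWc : Wᴴ ∈ Matrix.unitaryGroup (Fin p) ℂ := by
    rw [← Matrix.star_eq_conjTranspose]; exact Unitary.star_mem hW
  rw [noiseProj_mulVec, l2norm_mulVec_unitary hW]
  have h := l2norm_rdiag_le (fun i : Fin p => if n ≤ (i : ℕ) then (1 : ℝ) else 0)
    (Wᴴ *ᵥ x) 1 zero_le_one (fun t => by
      refine mul_le_mul_of_nonneg_right ?_ (norm_nonneg _)
      unfold padR
      split_ifs with h
      · show |if n ≤ t then (1 : ℝ) else 0| ≤ 1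
        split_ifs <;> norm_num
      · norm_num)
  rw [one_mul, l2norm_mulVec_unitary hWc] at h
  exact h

end Proj

section SVD

lemma svd_mulVec {A : Matrix (Fin p) (Fin q) ℂ} {W : Matrix (Fin p) (Fin p) ℂ}
    {σ : Fin p → ℝ} {Vt : Matrix (Fin q) (Fin q) ℂ} (h : IsSVD A W σ Vt) (x : Fin q → ℂ) :
    A *ᵥ x = W *ᵥ (rdiag p q σ *ᵥ (Vtᴴ *ᵥ x)) := by
  obtain ⟨-, -, -, -, hEq⟩ := h
  have hA : A = W * rdiag p q σ * Vtᴴ := hEq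
  rw [hA, Matrix.mulVec_mulVec, Matrix.mulVec_mulVec, Matrix.mul_assoc]

lemma sig_factor {n : ℕ} (hnp : n < p) (hnq : n ≤ q) {A : Matrix (Fin p) (Fin q) ℂ}
    {W : Matrix (Fin p) (Fin p) ℂ} {σ : Fin p → ℝ} {Vt : Matrix (Fin q) (Fin q) ℂ}
    (hSVD : IsSVD A W σ Vt) (μ : ℝ) (hμ : 0 < μ)
    (hlb : ∀ i : Fin p, (i : ℕ) < n → μ ≤ σ i) (v : Fin p → ℂ) :
    ∃ w : Fin q → ℂ, A *ᵥ w = sigProj n W *ᵥ v ∧ l2norm w ≤ l2norm v / μ := by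
  obtain ⟨hWu, hVtu, hanti, hnn, hEq⟩ := hSVD
  have hWcu : Wᴴ ∈ Matrix.unitaryGroup (Fin p) ℂ := by
    rw [← Matrix.star_eq_conjTranspose]; exact Unitary.star_mem hWu
  have hVtVt : Vtᴴ * Vt = 1 := Matrix.mem_unitaryGroup_iff'.mp hVtu
  set y : Fin p → ℂ := Wᴴ *ᵥ v with hy
  set dinv : Fin q → ℝ :=
    fun j => if h : (j : ℕ) < n then 1 / σ ⟨(j : ℕ), h.trans hnp⟩ else 0 with hdinv
  have hdinv_val : ∀ (j : Fin q) (h : (j : ℕ) < n), dinv j = 1 / σ ⟨(j : ℕ), h.trans hnp⟩ :=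
    fun j h => dif_pos h
  have hdinv_zero : ∀ j : Fin q, ¬ ((j : ℕ) < n) → dinv j = 0 :=
    fun j h => dif_neg h
  refine ⟨Vt *ᵥ (rdiag q p dinv *ᵥ y), ?_, ?_⟩
  · rw [svd_mulVec ⟨hWu, hVtu, hanti, hnn, hEq⟩, sigProj_mulVec,
      show Vtᴴ *ᵥ (Vt *ᵥ (rdiag q p dinv *ᵥ y)) = rdiag q p dinv *ᵥ y from by
        rw [Matrix.mulVec_mulVec, hVtVt, Matrix.one_mulVec]]
    refine congrArg (Matrix.mulVec W) (funext fun i => ?_)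
    rw [rdiag_mulVec, rdiag_mulVec]
    by_cases hi : (i : ℕ) < n
    · have hiq : (i : ℕ) < q := lt_of_lt_of_le hi hnq
      have hσpos : 0 < σ i := lt_of_lt_of_le hμ (hlb i hi)
      have hpc : padC (rdiag q p dinv *ᵥ y) (i : ℕ)
          = ((dinv ⟨(i : ℕ), hiq⟩ : ℝ) : ℂ) * padC y ((⟨(i : ℕ), hiq⟩ : Fin q) : ℕ) := by
        unfold padC
        rw [dif_pos hiq]
        rw [rdiag_mulVec dinv y ⟨(i : ℕ), hiq⟩]
        rfl
      have hval : dinv ⟨(i : ℕ), hiq⟩ = 1 / σ i := by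
        rw [hdinv_val ⟨(i : ℕ), hiq⟩ hi]
      rw [hpc, hval]
      have hred : ((⟨(i : ℕ), hiq⟩ : Fin q) : ℕ) = (i : ℕ) := rfl
      rw [hred, padC_coe y i, if_pos hi]
      have hne : ((σ i : ℝ) : ℂ) ≠ 0 := by exact_mod_cast ne_of_gt hσpos
      push_cast
      field_simp
    · have hpc0 : padC (rdiag q p dinv *ᵥ y) (i : ℕ) = 0 := by
        unfold padC
        split_ifs with hiq
        · rw [rdiag_mulVec]
          have hz : dinv ⟨(i : ℕ), hiq⟩ = 0 := hdinv_zero _ hi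
          rw [hz]
          norm_num
        · rfl
      rw [hpc0, mul_zero, if_neg hi]
      norm_num
  · rw [l2norm_mulVec_unitary hVtu]
    have hper : ∀ t : ℕ, |padR dinv t| * ‖padC y t‖
        ≤ 1 / μ * ‖padC y t‖ := by
      intro t
      refine mul_le_mul_of_nonneg_right ?_ (norm_nonneg _)
      by_cases htq : t < q
      · have h1 : padR dinv t = dinv ⟨t, htq⟩ := by unfold padR; rw [dif_pos htq]
        by_cases htn : t < n
        · have h2 : padR dinv t = 1 / σ ⟨t, htn.trans hnp⟩ := by
            rw [h1]
            exact hdinv_val ⟨t, htq⟩ htn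
          rw [h2]
          have hσpos : 0 < σ ⟨t, htn.trans hnp⟩ := lt_of_lt_of_le hμ (hlb _ htn)
          rw [abs_of_nonneg (by positivity)]
          rw [div_le_div_iff₀ hσpos hμ, one_mul, one_mul]
          exact hlb _ htn
        · have h2 : padR dinv t = 0 := by
            rw [h1]
            exact hdinv_zero ⟨t, htq⟩ htn
          rw [h2, abs_zero]
          positivity
      · rw [padR_of_le _ (by omega), abs_zero]
        positivity
    have hb := l2norm_rdiag_le dinv y (1 / μ) (by positivity) hper
    rw [l2norm_mulVec_unitary hWcu] at hb
    calc l2norm (rdiag q p dinv *ᵥ y) ≤ 1 / μ * l2norm v := hb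
      _ = l2norm v / μ := by ring

end SVD

section Weyl

lemma weyl_a {n : ℕ} (hnp : n < p) (hq : n < q) {Hs E : Matrix (Fin p) (Fin q) ℂ}
    {U : Matrix (Fin p) (Fin p) ℂ} {σH : Fin p → ℝ} {V : Matrix (Fin q) (Fin q) ℂ}
    (hH : IsSVD (Hs + E) U σH V) (hrank : Hs.rank = n)
    (e : ℝ) (hEop : ∀ x : Fin q → ℂ, l2norm (E *ᵥ x) ≤ e * l2norm x) :
    σH ⟨n, hnp⟩ ≤ e := by
  obtain ⟨hUu, hVu, hanti, hnn, hEq⟩ := hH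
  have hVV : Vᴴ * V = 1 := Matrix.mem_unitaryGroup_iff'.mp hVu
  obtain ⟨c, hc0, hker⟩ := exists_in_ker Hs (V * rdiag q (n + 1) (fun _ => 1))
    (by rw [hrank]; omega)
  set cq : Fin q → ℂ := rdiag q (n + 1) (fun _ => 1) *ᵥ c with hcq
  have hker' : Hs *ᵥ (V *ᵥ cq) = 0 := by
    rw [← Matrix.mulVec_mulVec] at hker
    rw [hcq]
    exact hker
  have hHx : (Hs + E) *ᵥ (V *ᵥ cq) = E *ᵥ (V *ᵥ cq) := by
    rw [Matrix.add_mulVec, hker', zero_add]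
  have hup : l2norm ((Hs + E) *ᵥ (V *ᵥ cq)) ≤ e * l2norm cq := by
    rw [hHx]
    calc l2norm (E *ᵥ (V *ᵥ cq)) ≤ e * l2norm (V *ᵥ cq) := hEop _
      _ = e * l2norm cq := by rw [l2norm_mulVec_unitary hVu]
  have hlow : σH ⟨n, hnp⟩ * l2norm cq ≤ l2norm ((Hs + E) *ᵥ (V *ᵥ cq)) := by
    rw [svd_mulVec ⟨hUu, hVu, hanti, hnn, hEq⟩, l2norm_mulVec_unitary hUu,
      show Vᴴ *ᵥ (V *ᵥ cq) = cq from by rw [Matrix.mulVec_mulVec, hVV, Matrix.one_mulVec]]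
    apply l2norm_rdiag_ge _ _ _ (hnn _)
    intro t
    by_cases hzt : padC cq t = 0
    · rw [hzt]
      simp
    · have htq : t < q := by
        by_contra hcon
        exact hzt (padC_of_le _ (by omega))
      have htn : t ≤ n := by
        by_contra hgt
        apply hzt
        unfold padC
        rw [dif_pos htq, hcq, rdiag_mulVec]
        rw [padC_of_le c (by show n + 1 ≤ t; omega)]
        exact mul_zero _
      have htp : t < p := by omega
      have h1 : padR σH t = σH ⟨t, htp⟩ := by unfold padR; rw [dif_pos htp]
      rw [h1, abs_of_nonneg (hnn _)]
      exact mul_le_mul_of_nonneg_right (hanti (Fin.mk_le_mk.mpr htn)) (norm_nonneg _)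
  have hcqne : cq ≠ 0 := by
    obtain ⟨j, hj⟩ := Function.ne_iff.mp hc0
    intro hcq0
    apply hj
    have hjq : (j : ℕ) < q := by have := j.isLt; omega
    have h0 : cq ⟨(j : ℕ), hjq⟩ = 0 := by rw [hcq0]; rfl
    rw [hcq, rdiag_mulVec] at h0
    have hpad : padC c ((⟨(j : ℕ), hjq⟩ : Fin q) : ℕ) = c j := by
      unfold padC
      rw [dif_pos (show ((⟨(j : ℕ), hjq⟩ : Fin q) : ℕ) < n + 1 from j.isLt)]
    rw [hpad] at h0
    simpa using h0
  have hpos : 0 < l2norm cq := l2norm_pos _ hcqne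
  exact le_of_mul_le_mul_right (hlow.trans hup) hpos

lemma weyl_b {n : ℕ} (hn : 1 ≤ n) (hnp : n < p) (hnq : n ≤ q)
    {Hs E : Matrix (Fin p) (Fin q) ℂ}
    {U : Matrix (Fin p) (Fin p) ℂ} {σH : Fin p → ℝ} {V : Matrix (Fin q) (Fin q) ℂ}
    {Us : Matrix (Fin p) (Fin p) ℂ} {σs : Fin p → ℝ} {Vs : Matrix (Fin q) (Fin q) ℂ}
    (hH : IsSVD (Hs + E) U σH V) (hHs : IsSVD Hs Us σs Vs)
    (εmin e : ℝ) (hεnn : 0 ≤ εmin)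
    (hσs_lb : ∀ i : Fin p, (i : ℕ) < n → εmin ≤ σs i)
    (hEop : ∀ x : Fin q → ℂ, l2norm (E *ᵥ x) ≤ e * l2norm x) (he0 : 0 ≤ e) :
    εmin - e ≤ σH ⟨n - 1, by omega⟩ := by
  obtain ⟨hUu, hVu, hanti, hnn, hEq⟩ := hH
  obtain ⟨hUsu, hVsu, hsanti, hsnn, hsEq⟩ := hHs
  have hVcu : Vᴴ ∈ Matrix.unitaryGroup (Fin q) ℂ := by
    rw [← Matrix.star_eq_conjTranspose]; exact Unitary.star_mem hVu
  obtain ⟨d, hd0, hker⟩ := exists_mulVec_zero (show n - 1 < n by omega)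
    (rdiag (n - 1) q (fun _ => 1) * (Vᴴ * (Vs * rdiag q n (fun _ => 1))))
  rw [← Matrix.mulVec_mulVec, ← Matrix.mulVec_mulVec, ← Matrix.mulVec_mulVec] at hker
  set dq : Fin q → ℂ := rdiag q n (fun _ => 1) *ᵥ d with hdq
  set x : Fin q → ℂ := Vs *ᵥ dq with hx
  set z : Fin q → ℂ := Vᴴ *ᵥ x with hz
  have hker' : rdiag (n - 1) q (fun _ => 1) *ᵥ z = 0 := hker
  have hz0 : ∀ t : ℕ, t < n - 1 → padC z t = 0 := by
    intro t ht
    have htq : t < q := by omega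
    have h0 : (rdiag (n - 1) q (fun _ => 1) *ᵥ z) ⟨t, by omega⟩ = 0 := by rw [hker']; rfl
    rw [rdiag_mulVec] at h0
    simpa using h0
  have hub : l2norm ((Hs + E) *ᵥ x) ≤ σH ⟨n - 1, by omega⟩ * l2norm x := by
    rw [svd_mulVec ⟨hUu, hVu, hanti, hnn, hEq⟩, l2norm_mulVec_unitary hUu]
    have hper : ∀ t : ℕ, |padR σH t| * ‖padC z t‖
        ≤ σH ⟨n - 1, by omega⟩ * ‖padC z t‖ := by
      intro t
      by_cases hzt : padC z t = 0
      · rw [hzt]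
        simp
      · have htn : n - 1 ≤ t := by
          by_contra hcon
          exact hzt (hz0 t (by omega))
        by_cases htp : t < p
        · have h1 : padR σH t = σH ⟨t, htp⟩ := by unfold padR; rw [dif_pos htp]
          rw [h1, abs_of_nonneg (hnn _)]
          exact mul_le_mul_of_nonneg_right (hanti (Fin.mk_le_mk.mpr htn)) (norm_nonneg _)
        · rw [padR_of_le _ (by omega), abs_zero, zero_mul]
          exact mul_nonneg (hnn _) (norm_nonneg _)
    have hb := l2norm_rdiag_le σH z (σH ⟨n - 1, by omega⟩) (hnn _) hper
    have hzx : l2norm z = l2norm x := by rw [hz, l2norm_mulVec_unitary hVcu]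
    rw [hzx] at hb
    exact hb
  have hlb2 : εmin * l2norm dq ≤ l2norm (Hs *ᵥ x) := by
    rw [svd_mulVec ⟨hUsu, hVsu, hsanti, hsnn, hsEq⟩, l2norm_mulVec_unitary hUsu,
      show Vsᴴ *ᵥ (Vs *ᵥ dq) = dq from by
        have hVsVs : Vsᴴ * Vs = 1 := Matrix.mem_unitaryGroup_iff'.mp hVsu
        rw [Matrix.mulVec_mulVec, hVsVs, Matrix.one_mulVec]]
    apply l2norm_rdiag_ge _ _ _ hεnn
    intro t
    by_cases hzt : padC dq t = 0
    · rw [hzt]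
      simp
    · have htq : t < q := by
        by_contra hcon
        exact hzt (padC_of_le _ (by omega))
      have htn : t < n := by
        by_contra hcon
        apply hzt
        unfold padC
        rw [dif_pos htq, hdq, rdiag_mulVec]
        rw [padC_of_le d (by show n ≤ t; omega)]
        exact mul_zero _
      have htp : t < p := by omega
      have h1 : padR σs t = σs ⟨t, htp⟩ := by unfold padR; rw [dif_pos htp]
      rw [h1, abs_of_nonneg (hsnn _)]
      exact mul_le_mul_of_nonneg_right (hσs_lb _ htn) (norm_nonneg _)
  have hsub : l2norm (Hs *ᵥ x) ≤ l2norm ((Hs + E) *ᵥ x) + e * l2norm x := by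
    have hxeq : Hs *ᵥ x = (Hs + E) *ᵥ x - E *ᵥ x := by
      rw [Matrix.add_mulVec, add_sub_cancel_right]
    rw [hxeq]
    exact (l2norm_sub_le _ _).trans (add_le_add le_rfl (hEop x))
  have hxdq : l2norm x = l2norm dq := by rw [hx]; exact l2norm_mulVec_unitary hVsu dq
  have hdqne : dq ≠ 0 := by
    obtain ⟨j, hj⟩ := Function.ne_iff.mp hd0
    intro hdq0
    apply hj
    have hjq : (j : ℕ) < q := by have := j.isLt; omega
    have h0 : dq ⟨(j : ℕ), hjq⟩ = 0 := by rw [hdq0]; rfl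
    rw [hdq, rdiag_mulVec] at h0
    have hpad : padC d ((⟨(j : ℕ), hjq⟩ : Fin q) : ℕ) = d j := by
      unfold padC
      rw [dif_pos (show ((⟨(j : ℕ), hjq⟩ : Fin q) : ℕ) < n from j.isLt)]
    rw [hpad] at h0
    simpa using h0
  have hpos : 0 < l2norm dq := l2norm_pos _ hdqne
  have h5 : εmin * l2norm dq ≤ (σH ⟨n - 1, by omega⟩ + e) * l2norm dq := by
    have h6 := hlb2.trans (hsub.trans (add_le_add hub le_rfl))
    rw [hxdq] at h6
    calc εmin * l2norm dq ≤ σH ⟨n - 1, by omega⟩ * l2norm dq + e * l2norm dq := h6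
      _ = (σH ⟨n - 1, by omega⟩ + e) * l2norm dq := by ring
  have h7 := le_of_mul_le_mul_right h5 hpos
  linarith

end Weyl

section PHBounds

lemma PH_bound {n : ℕ} {Hs E : Matrix (Fin p) (Fin q) ℂ}
    {U : Matrix (Fin p) (Fin p) ℂ} {σH : Fin p → ℝ} {V : Matrix (Fin q) (Fin q) ℂ}
    (hH : IsSVD (Hs + E) U σH V)
    (e : ℝ) (he0 : 0 ≤ e)
    (hbnd : ∀ (i : Fin p), n ≤ (i : ℕ) → (i : ℕ) < q → σH i ≤ e)
    (w : Fin q → ℂ) :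
    l2norm (noiseProj n U *ᵥ ((Hs + E) *ᵥ w)) ≤ e * l2norm w := by
  obtain ⟨hUu, hVu, hanti, hnn, hEq⟩ := hH
  have hUU : Uᴴ * U = 1 := Matrix.mem_unitaryGroup_iff'.mp hUu
  have hVcu : Vᴴ ∈ Matrix.unitaryGroup (Fin q) ℂ := by
    rw [← Matrix.star_eq_conjTranspose]; exact Unitary.star_mem hVu
  rw [svd_mulVec ⟨hUu, hVu, hanti, hnn, hEq⟩ w, noiseProj_mulVec,
    show Uᴴ *ᵥ (U *ᵥ (rdiag p q σH *ᵥ (Vᴴ *ᵥ w))) = rdiag p q σH *ᵥ (Vᴴ *ᵥ w) from by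
      rw [Matrix.mulVec_mulVec, hUU, Matrix.one_mulVec],
    l2norm_mulVec_unitary hUu, Matrix.mulVec_mulVec, rdiag_mul_rdiag]
  have hper : ∀ t : ℕ,
      |padR (fun i : Fin p => (if n ≤ (i : ℕ) then (1 : ℝ) else 0) * σH i) t|
        * ‖padC (Vᴴ *ᵥ w) t‖
      ≤ e * ‖padC (Vᴴ *ᵥ w) t‖ := by
    intro t
    by_cases htp : t < p
    · have h1 : padR (fun i : Fin p => (if n ≤ (i : ℕ) then (1 : ℝ) else 0) * σH i) t
          = (if n ≤ t then (1 : ℝ) else 0) * σH ⟨t, htp⟩ := by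
        unfold padR
        rw [dif_pos htp]
      rw [h1]
      by_cases htn : n ≤ t
      · rw [if_pos htn, one_mul]
        by_cases htq : t < q
        · rw [abs_of_nonneg (hnn _)]
          exact mul_le_mul_of_nonneg_right (hbnd ⟨t, htp⟩ htn htq) (norm_nonneg _)
        · rw [padC_of_le _ (by omega)]
          simp
      · rw [if_neg htn, zero_mul, abs_zero, zero_mul]
        positivity
    · rw [padR_of_le _ (by omega), abs_zero, zero_mul]
      positivity
  have hb := l2norm_rdiag_le _ (Vᴴ *ᵥ w) e he0 hper
  calc l2norm (rdiag p q (fun i : Fin p => (if n ≤ (i : ℕ) then (1 : ℝ) else 0) * σH i)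
        *ᵥ (Vᴴ *ᵥ w)) ≤ e * l2norm (Vᴴ *ᵥ w) := hb
    _ = e * l2norm w := by rw [l2norm_mulVec_unitary hVcu]

lemma PsHs_zero {n : ℕ} {Hs : Matrix (Fin p) (Fin q) ℂ}
    {Us : Matrix (Fin p) (Fin p) ℂ} {σs : Fin p → ℝ} {Vs : Matrix (Fin q) (Fin q) ℂ}
    (hHs : IsSVD Hs Us σs Vs)
    (hσs_zero : ∀ i : Fin p, n ≤ (i : ℕ) → σs i = 0) (w : Fin q → ℂ) :
    noiseProj n Us *ᵥ (Hs *ᵥ w) = 0 := by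
  obtain ⟨hUsu, hVsu, hsanti, hsnn, hsEq⟩ := hHs
  have hUsUs : Usᴴ * Us = 1 := Matrix.mem_unitaryGroup_iff'.mp hUsu
  rw [svd_mulVec ⟨hUsu, hVsu, hsanti, hsnn, hsEq⟩ w, noiseProj_mulVec,
    show Usᴴ *ᵥ (Us *ᵥ (rdiag p q σs *ᵥ (Vsᴴ *ᵥ w))) = rdiag p q σs *ᵥ (Vsᴴ *ᵥ w) from by
      rw [Matrix.mulVec_mulVec, hUsUs, Matrix.one_mulVec],
    show (rdiag p p fun i : Fin p => if n ≤ (i : ℕ) then (1 : ℝ) else 0)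
        *ᵥ (rdiag p q σs *ᵥ (Vsᴴ *ᵥ w))
      = rdiag p q (fun i : Fin p => (if n ≤ (i : ℕ) then (1 : ℝ) else 0) * σs i)
        *ᵥ (Vsᴴ *ᵥ w) from by rw [Matrix.mulVec_mulVec, rdiag_mul_rdiag]]
  have hzero : (fun i : Fin p => (if n ≤ (i : ℕ) then (1 : ℝ) else 0) * σs i)
      = fun _ => 0 := by
    funext i
    by_cases h : n ≤ (i : ℕ)
    · rw [if_pos h, one_mul, hσs_zero i h]
    · rw [if_neg h, zero_mul]
  rw [hzero]
  have hrd0 : rdiag p q (fun _ => (0 : ℝ)) = 0 := by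
    ext i j
    by_cases hij : (i : ℕ) = (j : ℕ) <;> simp [rdiag, hij]
  rw [hrd0, Matrix.zero_mulVec, Matrix.mulVec_zero]

end PHBounds

section Main

theorem main_bound {n : ℕ} (hn : 1 ≤ n) (hnp : n < p) (hnq : n ≤ q)
    (Hs E : Matrix (Fin p) (Fin q) ℂ)
    (U : Matrix (Fin p) (Fin p) ℂ) (σH : Fin p → ℝ) (V : Matrix (Fin q) (Fin q) ℂ)
    (hH : IsSVD (Hs + E) U σH V)
    (Us : Matrix (Fin p) (Fin p) ℂ) (σs : Fin p → ℝ) (Vs : Matrix (Fin q) (Fin q) ℂ)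
    (hHs : IsSVD Hs Us σs Vs)
    (hrank : Hs.rank = n)
    (hσs_zero : ∀ i : Fin p, n ≤ (i : ℕ) → σs i = 0)
    (εmin e : ℝ)
    (hσs_lb : ∀ i : Fin p, (i : ℕ) < n → εmin ≤ σs i)
    (he0 : 0 ≤ e)
    (hEop : ∀ x : Fin q → ℂ, l2norm (E *ᵥ x) ≤ e * l2norm x)
    (hE : 2 * e < εmin) (v : Fin p → ℂ) :
    |l2norm (noiseProj n U *ᵥ v) - l2norm (noiseProj n Us *ᵥ v)|
      ≤ 2 * e / εmin * l2norm v := by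
  have hεpos : 0 < εmin := lt_of_le_of_lt (by linarith) hE
  have hεe : 0 < εmin - e := by linarith
  have hUu : U ∈ Matrix.unitaryGroup (Fin p) ℂ := hH.1
  have hUsu : Us ∈ Matrix.unitaryGroup (Fin p) ℂ := hHs.1
  have hσHanti : Antitone σH := hH.2.2.1
  have hv0 : 0 ≤ l2norm v := l2norm_nonneg v
  -- Weyl bounds
  have hbnd : ∀ (i : Fin p), n ≤ (i : ℕ) → (i : ℕ) < q → σH i ≤ e := by
    intro i hin hiq
    have hq : n < q := lt_of_le_of_lt hin hiq
    have ha := weyl_a hnp hq hH hrank e hEop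
    exact le_trans (hσHanti (Fin.mk_le_mk.mpr hin)) ha
  have hb := weyl_b hn hnp hnq hH hHs εmin e hεpos.le hσs_lb hEop he0
  have hσH_lb : ∀ i : Fin p, (i : ℕ) < n → εmin - e ≤ σH i := by
    intro i hi
    refine le_trans hb (hσHanti (Fin.mk_le_mk.mpr ?_))
    omega
  -- operator bounds
  have hPH : ∀ w : Fin q → ℂ, l2norm (noiseProj n U *ᵥ ((Hs + E) *ᵥ w)) ≤ e * l2norm w :=
    PH_bound hH e he0 hbnd
  have hPHs : ∀ w : Fin q → ℂ, l2norm (noiseProj n U *ᵥ (Hs *ᵥ w)) ≤ 2 * e * l2norm w := by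
    intro w
    have hsplit : Hs *ᵥ w = (Hs + E) *ᵥ w - E *ᵥ w := by
      rw [Matrix.add_mulVec, add_sub_cancel_right]
    rw [hsplit, Matrix.mulVec_sub]
    refine (l2norm_sub_le _ _).trans ?_
    have h1 := hPH w
    have h2 : l2norm (noiseProj n U *ᵥ (E *ᵥ w)) ≤ e * l2norm w :=
      (noiseProj_contraction n hUu _).trans (hEop w)
    linarith
  have hPsH : ∀ w : Fin q → ℂ,
      l2norm (noiseProj n Us *ᵥ ((Hs + E) *ᵥ w)) ≤ e * l2norm w := by
    intro w
    rw [Matrix.add_mulVec, Matrix.mulVec_add, PsHs_zero hHs hσs_zero w, zero_add]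
    exact (noiseProj_contraction n hUsu _).trans (hEop w)
  -- signal space factorizations
  obtain ⟨ws, hws1, hws2⟩ := sig_factor hnp hnq hHs εmin hεpos hσs_lb v
  obtain ⟨w, hw1, hw2⟩ := sig_factor hnp hnq hH (εmin - e) hεe hσH_lb v
  -- decompositions
  have hid_s : v = noiseProj n Us *ᵥ v + sigProj n Us *ᵥ v := by
    have h := noiseProj_add_sigProj n hUsu
    have h2 : (noiseProj n Us + sigProj n Us) *ᵥ v = v := by
      rw [h, Matrix.one_mulVec]
    rw [Matrix.add_mulVec] at h2
    exact h2.symm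
  have hid : v = noiseProj n U *ᵥ v + sigProj n U *ᵥ v := by
    have h := noiseProj_add_sigProj n hUu
    have h2 : (noiseProj n U + sigProj n U) *ᵥ v = v := by
      rw [h, Matrix.one_mulVec]
    rw [Matrix.add_mulVec] at h2
    exact h2.symm
  -- direction 1
  have d1 : l2norm (noiseProj n U *ᵥ v)
      ≤ l2norm (noiseProj n Us *ᵥ v) + 2 * e / εmin * l2norm v := by
    have hcalc : l2norm (noiseProj n U *ᵥ v)
        ≤ l2norm (noiseProj n Us *ᵥ v) + 2 * e * l2norm ws := by
      calc l2norm (noiseProj n U *ᵥ v)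
          = l2norm (noiseProj n U *ᵥ (noiseProj n Us *ᵥ v)
              + noiseProj n U *ᵥ (sigProj n Us *ᵥ v)) := by
            conv_lhs => rw [hid_s, Matrix.mulVec_add]
        _ ≤ l2norm (noiseProj n U *ᵥ (noiseProj n Us *ᵥ v))
              + l2norm (noiseProj n U *ᵥ (sigProj n Us *ᵥ v)) := l2norm_add_le _ _
        _ ≤ l2norm (noiseProj n Us *ᵥ v) + 2 * e * l2norm ws := by
            refine add_le_add (noiseProj_contraction n hUu _) ?_
            rw [← hws1]
            exact hPHs ws
    have hws3 : 2 * e * l2norm ws ≤ 2 * e / εmin * l2norm v := by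
      calc 2 * e * l2norm ws ≤ 2 * e * (l2norm v / εmin) :=
            mul_le_mul_of_nonneg_left hws2 (by linarith)
        _ = 2 * e / εmin * l2norm v := by ring
    linarith
  -- direction 2
  have d2 : l2norm (noiseProj n Us *ᵥ v)
      ≤ l2norm (noiseProj n U *ᵥ v) + 2 * e / εmin * l2norm v := by
    have hcalc : l2norm (noiseProj n Us *ᵥ v)
        ≤ l2norm (noiseProj n U *ᵥ v) + e * l2norm w := by
      calc l2norm (noiseProj n Us *ᵥ v)
          = l2norm (noiseProj n Us *ᵥ (noiseProj n U *ᵥ v)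
              + noiseProj n Us *ᵥ (sigProj n U *ᵥ v)) := by
            conv_lhs => rw [hid, Matrix.mulVec_add]
        _ ≤ l2norm (noiseProj n Us *ᵥ (noiseProj n U *ᵥ v))
              + l2norm (noiseProj n Us *ᵥ (sigProj n U *ᵥ v)) := l2norm_add_le _ _
        _ ≤ l2norm (noiseProj n U *ᵥ v) + e * l2norm w := by
            refine add_le_add (noiseProj_contraction n hUsu _) ?_
            rw [← hw1]
            exact hPsH w
    have hw3 : e * l2norm w ≤ 2 * e / εmin * l2norm v := by
      have h1 : e / (εmin - e) ≤ 2 * e / εmin := by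
        rw [div_le_div_iff₀ hεe hεpos]
        nlinarith
      calc e * l2norm w ≤ e * (l2norm v / (εmin - e)) :=
            mul_le_mul_of_nonneg_left hw2 he0
        _ = (e / (εmin - e)) * l2norm v := by ring
        _ ≤ (2 * e / εmin) * l2norm v := mul_le_mul_of_nonneg_right h1 hv0
    linarith
  rw [abs_sub_le_iff]
  constructor <;> linarith

end Main

end RBP

open RB in
/-- MUSIC noise-correlation function bound: if the ideal Hankel matrix has rank exactly `n`
with smallest nonzero singular value `ε_min` and `2‖E‖ < ε_min`, then the noise-space
correlation function of the perturbed Hankel matrix deviates from the ideal one by at most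
`2‖E‖/ε_min`, uniformly in `z`. -/
theorem music_noise_correlation_bound
    (M L n : ℕ) (hL1 : 1 ≤ L) (hLM : L < M) (hn : 1 ≤ n)
    (hLn : n ≤ L) (hMLn : n ≤ M - L + 1)
    (s α : Fin (M + 1) → ℂ)
    -- SVD of the noisy Hankel matrix `H = Hankel_L(s + α)`
    (U : Matrix (Fin (L + 1)) (Fin (L + 1)) ℂ) (σH : Fin (L + 1) → ℝ)
    (V : Matrix (Fin (M - L + 1)) (Fin (M - L + 1)) ℂ)
    (hH : IsSVD (hankelMat M L hLM.le (s + α)) U σH V)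
    -- SVD of the ideal Hankel matrix `H_s = Hankel_L(s)`
    (Us : Matrix (Fin (L + 1)) (Fin (L + 1)) ℂ) (σs : Fin (L + 1) → ℝ)
    (Vs : Matrix (Fin (M - L + 1)) (Fin (M - L + 1)) ℂ)
    (hHs : IsSVD (hankelMat M L hLM.le s) Us σs Vs)
    -- `H_s` has rank exactly `n`:
    (hrank : (hankelMat M L hLM.le s).rank = n)
    (hσs_zero : ∀ i : Fin (L + 1), n ≤ (i : ℕ) → σs i = 0)
    (hσs_pos : ∀ i : Fin (L + 1), (i : ℕ) < n → 0 < σs i)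
    -- the smallest nonzero singular value of `H_s`
    (εmin : ℝ) (hεmin : εmin = σs ⟨n - 1, by omega⟩)
    (hE : 2 * specNorm (hankelMat M L hLM.le α) < εmin) :
    ∀ z : ℂ,
      |musicR (noiseProj n U) z - musicR (noiseProj n Us) z|
        ≤ 2 * specNorm (hankelMat M L hLM.le α) / εmin := by
  intro z
  have hp : n < L + 1 := by omega
  have hq : n ≤ M - L + 1 := hMLn
  have hadd : hankelMat M L hLM.le (s + α)
      = hankelMat M L hLM.le s + hankelMat M L hLM.le α := by
    ext j k
    simp [hankelMat]
  set e := specNorm (hankelMat M L hLM.le α) with he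
  have he0 : 0 ≤ e := RBP.specNorm_nonneg _
  have hEop : ∀ x : Fin (M - L + 1) → ℂ,
      l2norm (hankelMat M L hLM.le α *ᵥ x) ≤ e * l2norm x :=
    fun x => RBP.specNorm_mulVec_le _ x
  have hσs_lb : ∀ i : Fin (L + 1), (i : ℕ) < n → εmin ≤ σs i := by
    intro i hi
    rw [hεmin]
    refine hHs.2.2.1 ?_
    show (i : ℕ) ≤ n - 1
    omega
  have hH' : IsSVD (hankelMat M L hLM.le s + hankelMat M L hLM.le α) U σH V := by
    rw [← hadd]
    exact hH
  set v : Fin (L + 1) → ℂ := fun i => z ^ (i : ℕ) with hv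
  have key := RBP.main_bound (n := n) hn hp hq (hankelMat M L hLM.le s)
    (hankelMat M L hLM.le α) U σH V hH' Us σs Vs hHs hrank hσs_zero εmin e hσs_lb
    he0 hEop hE v
  have hvpos : 0 < l2norm v := by
    apply RBP.l2norm_pos
    intro h0
    have h1 : v 0 = 0 := by rw [h0]; rfl
    rw [hv] at h1
    simp at h1
  unfold musicR
  rw [div_sub_div_same, abs_div, abs_of_pos hvpos, div_le_iff₀ hvpos]
  exact key
end

section
/- The Fourier transform of a representation is an orthogonal projection of rank equal to the multiplicity. Let G be a finite group, ω a finite-dimensional unitary matrix representation of G, and σ an irreducible unitary matrix representation of G. Then F(ω)[σ] satisfies (F(ω)[σ])² = F(ω)[σ] and F(ω)[σ]† = F(ω)[σ] (it is an orthogonal projection), and tr(F(ω)[σ]) = (1/|G|) Σ_{g∈G} conj(χ_σ(g))·χ_ω(g), the multiplicity of σ in ω; in particular F(ω)[σ] = 0 if and only if σ does not occur as a subrepresentation of ω. -/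
open scoped Matrix Kronecker BigOperators

namespace RB

variable {G : Type} [Group G] [Fintype G]

/-- Convolution of matrix-valued maps on a finite group:
`(φ * φ')(g) = |G|⁻¹ Σ_{g'} φ(g g'⁻¹) φ'(g')`. -/
noncomputable def convMap {d' : ℕ} (φ φ' : G → Matrix (Fin d') (Fin d') ℂ) :
    G → Matrix (Fin d') (Fin d') ℂ :=
  fun g => (Fintype.card G : ℂ)⁻¹ • ∑ g' : G, φ (g * g'⁻¹) * φ' g'

/-- The matrix-valued Fourier transform of `φ` at a representation `σ`:
`F(φ)[σ] = |G|⁻¹ Σ_g conj(σ(g)) ⊗ φ(g)`. -/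
noncomputable def fourierTransform {dσ d' : ℕ} (φ : G → Matrix (Fin d') (Fin d') ℂ)
    (σ : G → Matrix (Fin dσ) (Fin dσ) ℂ) :
    Matrix (Fin dσ × Fin d') (Fin dσ × Fin d') ℂ :=
  (Fintype.card G : ℂ)⁻¹ • ∑ g : G, ((σ g).map (starRingEnd ℂ)) ⊗ₖ (φ g)

/-- Partial trace over the first tensor factor. -/
noncomputable def partialTraceFst {a b : ℕ} (A : Matrix (Fin a × Fin b) (Fin a × Fin b) ℂ) :
    Matrix (Fin b) (Fin b) ℂ :=
  Matrix.of fun j k => ∑ i : Fin a, A (i, j) (i, k)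

/-- Irreducibility of a matrix representation: no nontrivial invariant subspace. -/
def Irreducible {k : ℕ} (σ : G →* Matrix (Fin k) (Fin k) ℂ) : Prop :=
  ∀ p : Submodule ℂ (Fin k → ℂ), (∀ g : G, ∀ x ∈ p, (σ g).mulVec x ∈ p) → p = ⊥ ∨ p = ⊤

/-- Equivalence of matrix representations: a bijective intertwiner. -/
def RepEquiv {k l : ℕ} (σ : G →* Matrix (Fin k) (Fin k) ℂ)
    (τ : G →* Matrix (Fin l) (Fin l) ℂ) : Prop :=
  ∃ T : Matrix (Fin k) (Fin l) ℂ,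
    Function.Bijective T.mulVecLin ∧ ∀ g : G, σ g * T = T * τ g

end RB

set_option linter.unusedSectionVars false

namespace FTAux

open RB

variable {G : Type} [Group G] [Fintype G]

lemma inv_eq_conjTranspose {n : ℕ} (ρ : G →* Matrix (Fin n) (Fin n) ℂ)
    (hρ : ∀ g, ρ g ∈ Matrix.unitaryGroup (Fin n) ℂ) (g : G) : ρ g⁻¹ = (ρ g)ᴴ := by
  have h1 : ρ g * (ρ g)ᴴ = 1 := by
    have := (Matrix.mem_unitaryGroup_iff.mp (hρ g))
    simpa [Matrix.star_eq_conjTranspose] using this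
  calc ρ g⁻¹ = ρ g⁻¹ * (ρ g * (ρ g)ᴴ) := by rw [h1, mul_one]
    _ = (ρ g⁻¹ * ρ g) * (ρ g)ᴴ := by rw [mul_assoc]
    _ = (ρ g)ᴴ := by rw [← map_mul, inv_mul_cancel, map_one, one_mul]

lemma card_ne : (Fintype.card G : ℂ) ≠ 0 := by
  exact_mod_cast Fintype.card_ne_zero

variable {k dσ : ℕ} (ω : G →* Matrix (Fin k) (Fin k) ℂ) (σ : G →* Matrix (Fin dσ) (Fin dσ) ℂ)

noncomputable def term (g : G) : Matrix (Fin dσ × Fin k) (Fin dσ × Fin k) ℂ :=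
  ((σ g).map (starRingEnd ℂ)) ⊗ₖ (ω g)

lemma ft_eq : fourierTransform (ω : G → Matrix (Fin k) (Fin k) ℂ)
    (σ : G → Matrix (Fin dσ) (Fin dσ) ℂ)
    = (Fintype.card G : ℂ)⁻¹ • ∑ g : G, term ω σ g := rfl

lemma term_mul (g h : G) : term ω σ g * term ω σ h = term ω σ (g * h) := by
  simp only [term, ← Matrix.mul_kronecker_mul, ← Matrix.map_mul, ← map_mul]

lemma ft_idem :
    (Fintype.card G : ℂ)⁻¹ • (∑ g : G, term ω σ g) * ((Fintype.card G : ℂ)⁻¹ • ∑ g : G, term ω σ g)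
      = (Fintype.card G : ℂ)⁻¹ • ∑ g : G, term ω σ g := by
  rw [Matrix.smul_mul, Matrix.mul_smul, Finset.sum_mul]
  have h1 : ∀ g : G, term ω σ g * (∑ h : G, term ω σ h) = ∑ h : G, term ω σ h := by
    intro g
    rw [Finset.mul_sum]
    refine Fintype.sum_equiv (Equiv.mulLeft g) _ _ fun h => ?_
    simp [term_mul]
  simp only [h1, Finset.sum_const, Finset.card_univ]
  rw [smul_smul, ← Nat.cast_smul_eq_nsmul ℂ, smul_smul]
  congr 1
  field_simp

lemma term_conjTranspose (hω : ∀ g : G, ω g ∈ Matrix.unitaryGroup (Fin k) ℂ)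
    (hσ : ∀ g : G, σ g ∈ Matrix.unitaryGroup (Fin dσ) ℂ) (g : G) :
    (term ω σ g)ᴴ = term ω σ g⁻¹ := by
  ext ⟨i, j⟩ ⟨i', j'⟩
  simp only [term, Matrix.conjTranspose_apply, Matrix.kroneckerMap_apply, Matrix.map_apply,
    inv_eq_conjTranspose ω hω, inv_eq_conjTranspose σ hσ, star_mul', RingHom.coe_coe]
  simp [mul_comm]

lemma ft_herm (hω : ∀ g : G, ω g ∈ Matrix.unitaryGroup (Fin k) ℂ)
    (hσ : ∀ g : G, σ g ∈ Matrix.unitaryGroup (Fin dσ) ℂ) :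
    ((Fintype.card G : ℂ)⁻¹ • ∑ g : G, term ω σ g)ᴴ
      = (Fintype.card G : ℂ)⁻¹ • ∑ g : G, term ω σ g := by
  rw [Matrix.conjTranspose_smul, Matrix.conjTranspose_sum]
  have hc : (starRingEnd ℂ) ((Fintype.card G : ℂ)⁻¹) = (Fintype.card G : ℂ)⁻¹ := by
    simp
  rw [show (star ((Fintype.card G : ℂ)⁻¹)) = (Fintype.card G : ℂ)⁻¹ from hc]
  congr 1
  refine Fintype.sum_equiv (Equiv.inv G) _ _ fun g => ?_
  simp [term_conjTranspose ω σ hω hσ]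

lemma term_trace (g : G) :
    (term ω σ g).trace = (starRingEnd ℂ) ((σ g).trace) * (ω g).trace := by
  rw [term, Matrix.trace_kronecker]
  congr 1
  simp [Matrix.trace, Matrix.diag, map_sum]

noncomputable def avg (T : Matrix (Fin k) (Fin dσ) ℂ) : Matrix (Fin k) (Fin dσ) ℂ :=
  (Fintype.card G : ℂ)⁻¹ • ∑ g : G, ω g * T * σ g⁻¹

lemma avg_intertwines (T : Matrix (Fin k) (Fin dσ) ℂ) (h : G) :
    ω h * avg ω σ T = avg ω σ T * σ h := by
  unfold avg
  rw [Matrix.mul_smul, Matrix.smul_mul, Matrix.mul_sum, Matrix.sum_mul]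
  congr 1
  refine Fintype.sum_equiv (Equiv.mulLeft h) _ _ fun g => ?_
  simp only [Equiv.coe_mulLeft]
  have hs : σ ((h * g)⁻¹) * σ h = σ g⁻¹ := by
    rw [← map_mul]; congr 1; group
  rw [map_mul, Matrix.mul_assoc (ω h * ω g * T), hs]
  simp [Matrix.mul_assoc]

lemma avg_fixed (T : Matrix (Fin k) (Fin dσ) ℂ)
    (hT : ∀ g : G, ω g * T = T * σ g) : avg ω σ T = T := by
  unfold avg
  have : ∀ g : G, ω g * T * σ g⁻¹ = T := by
    intro g
    rw [hT g, Matrix.mul_assoc, ← map_mul σ, mul_inv_cancel, map_one, Matrix.mul_one]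
  simp only [this, Finset.sum_const, Finset.card_univ]
  rw [← Nat.cast_smul_eq_nsmul ℂ, smul_smul, inv_mul_cancel₀ card_ne, one_smul]

lemma ft_mulVec (hσ : ∀ g : G, σ g ∈ Matrix.unitaryGroup (Fin dσ) ℂ)
    (T : Matrix (Fin k) (Fin dσ) ℂ) :
    (fourierTransform (ω : G → Matrix (Fin k) (Fin k) ℂ)
        (σ : G → Matrix (Fin dσ) (Fin dσ) ℂ)).mulVec (fun p => T p.2 p.1)
      = fun p => avg ω σ T p.2 p.1 := by
  have hinv : ∀ (g : G) (a : Fin dσ) (b : Fin dσ),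
      σ g⁻¹ a b = (starRingEnd ℂ) (σ g b a) := by
    intro g a b
    rw [inv_eq_conjTranspose σ hσ, Matrix.conjTranspose_apply]
    rfl
  funext ⟨i, j⟩
  simp only [fourierTransform, avg, Matrix.mulVec, dotProduct, Matrix.smul_apply,
    Matrix.sum_apply, Matrix.kroneckerMap_apply, Matrix.map_apply, smul_eq_mul,
    Matrix.mul_apply, hinv]
  simp only [Finset.sum_mul, Finset.mul_sum]
  conv_lhs => rw [Fintype.sum_prod_type]
  conv_rhs => rw [Finset.sum_comm]
  refine Finset.sum_congr rfl fun i' _ => ?_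
  rw [Finset.sum_comm]
  refine Finset.sum_congr rfl fun g _ => Finset.sum_congr rfl fun j' _ => ?_
  ring

end FTAux


open RB in
/-- The Fourier transform of a unitary representation at an irreducible unitary
representation is an orthogonal projection whose rank (trace) is the multiplicity;
it vanishes iff the irreducible does not occur as a subrepresentation. -/
theorem fourierTransform_of_representation_isProjection
    {G : Type} [Group G] [Fintype G]
    (k dσ : ℕ)
    (ω : G →* Matrix (Fin k) (Fin k) ℂ)
    (hω : ∀ g : G, ω g ∈ Matrix.unitaryGroup (Fin k) ℂ)
    (σ : G →* Matrix (Fin dσ) (Fin dσ) ℂ)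
    (hσ : ∀ g : G, σ g ∈ Matrix.unitaryGroup (Fin dσ) ℂ)
    (hirred : Irreducible σ) :
    (fourierTransform (ω : G → Matrix (Fin k) (Fin k) ℂ)
          (σ : G → Matrix (Fin dσ) (Fin dσ) ℂ) *
        fourierTransform (ω : G → Matrix (Fin k) (Fin k) ℂ)
          (σ : G → Matrix (Fin dσ) (Fin dσ) ℂ)
      = fourierTransform (ω : G → Matrix (Fin k) (Fin k) ℂ)
          (σ : G → Matrix (Fin dσ) (Fin dσ) ℂ)) ∧
    ((fourierTransform (ω : G → Matrix (Fin k) (Fin k) ℂ)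
          (σ : G → Matrix (Fin dσ) (Fin dσ) ℂ))ᴴ
      = fourierTransform (ω : G → Matrix (Fin k) (Fin k) ℂ)
          (σ : G → Matrix (Fin dσ) (Fin dσ) ℂ)) ∧
    ((fourierTransform (ω : G → Matrix (Fin k) (Fin k) ℂ)
          (σ : G → Matrix (Fin dσ) (Fin dσ) ℂ)).trace
      = (Fintype.card G : ℂ)⁻¹ *
          ∑ g : G, (starRingEnd ℂ) ((σ g).trace) * (ω g).trace) ∧
    ((fourierTransform (ω : G → Matrix (Fin k) (Fin k) ℂ)
          (σ : G → Matrix (Fin dσ) (Fin dσ) ℂ) = 0)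
      ↔ ¬ ∃ T : Matrix (Fin k) (Fin dσ) ℂ, T ≠ 0 ∧ ∀ g : G, ω g * T = T * σ g) := by
  refine ⟨?_, ?_, ?_, ?_⟩
  · rw [FTAux.ft_eq]; exact FTAux.ft_idem ω σ
  · rw [FTAux.ft_eq]; exact FTAux.ft_herm ω σ hω hσ
  · rw [FTAux.ft_eq, Matrix.trace_smul, Matrix.trace_sum, smul_eq_mul]
    congr 1
    exact Finset.sum_congr rfl fun g _ => FTAux.term_trace ω σ g
  · constructor
    · rintro hF ⟨T, hT0, hTint⟩
      apply hT0
      have h1 := FTAux.ft_mulVec ω σ hσ T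
      rw [hF, Matrix.zero_mulVec, FTAux.avg_fixed ω σ T hTint] at h1
      ext a b
      exact (congrFun h1.symm (b, a))
    · intro hno
      have hz : ∀ T : Matrix (Fin k) (Fin dσ) ℂ, FTAux.avg ω σ T = 0 := by
        intro T
        by_contra hne
        exact hno ⟨FTAux.avg ω σ T, hne, FTAux.avg_intertwines ω σ T⟩
      have hmv : ∀ x : Fin dσ × Fin k → ℂ,
          (fourierTransform (ω : G → Matrix (Fin k) (Fin k) ℂ)
            (σ : G → Matrix (Fin dσ) (Fin dσ) ℂ)).mulVec x = 0 := by
        intro x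
        have := FTAux.ft_mulVec ω σ hσ (Matrix.of fun b a => x (a, b))
        rw [hz] at this
        convert this using 2 <;> rfl
      ext p q
      have := congrFun (hmv (Pi.single q 1)) p
      simpa using this
end
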